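/- Rate-distortion function of erased fair coin flips: let S be an equiprobable binary source observed through a binary erasure channel with erasure rate δ ∈ (0,1), with bit-error (Hamming) distortion d(s, z) = 1{s ≠ z} measured against the clean source. For δ/2 ≤ d ≤ 1/2, the noisy rate-distortion function equals R(d) = (1 − δ)·( log 2 − h( (d − δ/2)/(1 − δ) ) ), where h is the binary entropy function; the minimum is achieved by the equiprobable reproduction distribution P_{Z*}(0) = P_{Z*}(1) = 1/2 together with the backward channel P_{X|Z*}(b|b) = 1 − d − δ/2, P_{X|Z*}(a|b) = d − δ/2 for a ≠ b with a, b ∈ {0,1}, and P_{X|Z*}(?|b) = δ. -/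

import Mathlib

open scoped BigOperators

noncomputable section

/-- `p` is a probability mass function on a finite type. -/
def IsPMF {α : Type*} [Fintype α] (p : α → ℝ) : Prop :=
  (∀ a, 0 ≤ p a) ∧ ∑ a, p a = 1

/-- `W` is a transition probability kernel (a random transformation). -/
def IsKernel {α β : Type*} [Fintype β] (W : α → β → ℝ) : Prop :=
  ∀ a, IsPMF (W a)

/-- Equiprobable binary source. -/
def PSb : Bool → ℝ := fun _ => 1 / 2

/-- Binary erasure channel with erasure rate `δ`; `none` is the erasure symbol `?`. -/
def Wbec (δ : ℝ) : Bool → Option Bool → ℝ :=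
  fun s x => if x = some s then 1 - δ else if x = none then δ else 0

/-- Bit-error (Hamming) distortion measured against the clean source. -/
def dstH : Bool → Bool → ℝ := fun s z => if s = z then 0 else 1

/-- Distribution of the channel output `X`. -/
def PXbec (δ : ℝ) (x : Option Bool) : ℝ := ∑ s, PSb s * Wbec δ s x

/-- Output marginal of a test channel `Q`. -/
def margZ (δ : ℝ) (Q : Option Bool → Bool → ℝ) (z : Bool) : ℝ :=
  ∑ x, PXbec δ x * Q x z

/-- Mutual information `I(X; Z)`. -/
def mutInfo (δ : ℝ) (Q : Option Bool → Bool → ℝ) : ℝ :=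
  ∑ x, ∑ z, PXbec δ x * Q x z * Real.log (Q x z / margZ δ Q z)

/-- Average bit-error distortion `E[dstH(S, Z)]` under `PSb ⊗ Wbec δ ⊗ Q`. -/
def avgDist (δ : ℝ) (Q : Option Bool → Bool → ℝ) : ℝ :=
  ∑ s, ∑ x, ∑ z, PSb s * Wbec δ s x * Q x z * dstH s z

/-- Noisy rate-distortion function
`R(d) = min { I(X;Z) : P_{Z|X}, E[dstH(S,Z)] ≤ d, S − X − Z }`. -/
def Rbes (δ d : ℝ) : ℝ :=
  sInf { r | ∃ Q : Option Bool → Bool → ℝ,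
      IsKernel Q ∧ avgDist δ Q ≤ d ∧ mutInfo δ Q = r }

/-- Binary entropy function. -/
def binEnt (p : ℝ) : ℝ := -p * Real.log p - (1 - p) * Real.log (1 - p)

/-- The optimal backward channel `P_{X|Z*}`. -/
def backB (δ d : ℝ) : Bool → Option Bool → ℝ :=
  fun b x => if x = some b then 1 - d - δ / 2 else if x = none then δ else d - δ / 2

/-- The forward test channel induced by equiprobable `P_{Z*}` and the backward
channel `backB`: `Q*(z|x) = P_{Z*}(z) P_{X|Z*}(x|z) / P_X(x)`. -/
def QstBes (δ d : ℝ) : Option Bool → Bool → ℝ :=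
  fun x z => (1 / 2 * backB δ d z x) / PXbec δ x

-- basic values
lemma PX_some (δ : ℝ) (b : Bool) : PXbec δ (some b) = (1 - δ) / 2 := by
  cases b <;> simp [PXbec, PSb, Wbec, Fintype.sum_bool] <;> ring

lemma PX_none (δ : ℝ) : PXbec δ none = δ := by
  simp [PXbec, PSb, Wbec, Fintype.sum_bool]

lemma term_ineq (P Qv PZ r : ℝ) (hP : 0 ≤ P) (hQv : 0 ≤ Qv) (hPZ : P * Qv ≤ PZ)
    (hr : 0 ≤ r) (hpos : P * Qv ≠ 0 → 0 < r) :
    P * Qv * Real.log (r / P) + (P * Qv - PZ * r) ≤ P * Qv * Real.log (Qv / PZ) := by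
  rcases eq_or_ne (P * Qv) 0 with h | h
  · have hPZ0 : 0 ≤ PZ := h ▸ hPZ
    rw [h]
    have : 0 ≤ PZ * r := mul_nonneg hPZ0 hr
    simp
    linarith
  · have hPp : 0 < P := lt_of_le_of_ne hP (by rintro rfl; exact h (by ring))
    have hQvp : 0 < Qv := lt_of_le_of_ne hQv (by rintro rfl; exact h (by ring))
    have hp : 0 < P * Qv := mul_pos hPp hQvp
    have hPZp : 0 < PZ := lt_of_lt_of_le hp hPZ
    have hrp : 0 < r := hpos h
    have key := Real.log_le_sub_one_of_pos
      (show (0:ℝ) < PZ * r / (P * Qv) from div_pos (mul_pos hPZp hrp) hp)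
    rw [Real.log_div (mul_pos hPZp hrp).ne' hp.ne', Real.log_mul hPZp.ne' hrp.ne',
      Real.log_mul hPp.ne' hQvp.ne'] at key
    have hd : (P * Qv) * (PZ * r / (P * Qv)) = PZ * r := mul_div_cancel₀ _ h
    rw [Real.log_div hrp.ne' hPp.ne', Real.log_div hQvp.ne' hPZp.ne']
    have key2 := mul_le_mul_of_nonneg_left key hp.le
    nlinarith [key2, hd]

lemma sum_backB (δ d : ℝ) (z : Bool) : ∑ x, backB δ d z x = 1 := by
  cases z <;> simp [backB, Fintype.sum_option, Fintype.sum_bool] <;> ring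

lemma sum_PX (δ : ℝ) : ∑ x, PXbec δ x = 1 := by
  simp [Fintype.sum_option, Fintype.sum_bool, PX_some, PX_none]; ring

set_option maxHeartbeats 1000000 in
lemma converse (δ d : ℝ) (hδ0 : 0 < δ) (hδ1 : δ < 1) (hd1 : δ / 2 ≤ d) (hd2 : d ≤ 1 / 2)
    (Q : Option Bool → Bool → ℝ) (hQ : IsKernel Q) (hdist : avgDist δ Q ≤ d) :
    (1 - δ) * (Real.log 2 - binEnt ((d - δ / 2) / (1 - δ))) ≤ mutInfo δ Q := by
  have hQ0 : ∀ x z, 0 ≤ Q x z := fun x => (hQ x).1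
  have hQ1 : ∀ x, Q x true + Q x false = 1 := by
    intro x; have := (hQ x).2; rwa [Fintype.sum_bool] at this
  have h1δ : (0:ℝ) < 1 - δ := by linarith
  have hA0 : (0:ℝ) ≤ d - δ/2 := by linarith
  have hAB : d - δ/2 ≤ 1 - d - δ/2 := by linarith
  have hB0 : (0:ℝ) < 1 - d - δ/2 := by linarith
  -- distortion constraint in usable form
  have hE : (1-δ)/2 * (Q (some false) true + Q (some true) false) ≤ d - δ/2 := by
    have hn : δ * Q none true + δ * Q none false = δ := by
      have := hQ1 none; nlinarith
    simp [avgDist, PSb, Wbec, dstH, Fintype.sum_option, Fintype.sum_bool] at hdist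
    nlinarith [hdist, hn]
  have hPX0 : ∀ x, 0 ≤ PXbec δ x := by
    rintro (_ | b)
    · rw [PX_none]; linarith
    · rw [PX_some]; linarith
  have hPZ_ge : ∀ x z, PXbec δ x * Q x z ≤ margZ δ Q z := by
    intro x z
    exact Finset.single_le_sum (f := fun x => PXbec δ x * Q x z)
      (fun i _ => mul_nonneg (hPX0 i) (hQ0 i z)) (Finset.mem_univ x)
  have hr0 : ∀ z x, 0 ≤ backB δ d z x := by
    intro z x
    unfold backB
    split_ifs <;> linarith
  have hposcase : ∀ x z, PXbec δ x * Q x z ≠ 0 → 0 < backB δ d z x := by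
    intro x z hne
    unfold backB
    split_ifs with h1 h2
    · linarith
    · exact hδ0
    · -- x = some (!z), value d - δ/2
      rcases hA0.lt_or_eq with hlt | heq
      · exact hlt
      · exfalso
        have he0 : 0 ≤ Q (some false) true := hQ0 _ _
        have he1 : 0 ≤ Q (some true) false := hQ0 _ _
        have hsum0 : Q (some false) true + Q (some true) false ≤ 0 := by nlinarith
        have hz0 : Q (some false) true = 0 := by linarith
        have hz1 : Q (some true) false = 0 := by linarith
        have hQz : Q x z = 0 := by
          rcases x with _ | b
          · exact absurd rfl h2
          · cases b <;> cases z
            · exact absurd rfl h1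
            · exact hz0
            · exact hz1
            · exact absurd rfl h1
        rw [hQz, mul_zero] at hne
        exact hne rfl
  have hlow : ∑ x, ∑ z, (PXbec δ x * Q x z * Real.log (backB δ d z x / PXbec δ x)
      + (PXbec δ x * Q x z - margZ δ Q z * backB δ d z x)) ≤ mutInfo δ Q := by
    unfold mutInfo
    apply Finset.sum_le_sum
    intro x _
    apply Finset.sum_le_sum
    intro z _
    exact term_ineq _ _ _ _ (hPX0 x) (hQ0 x z) (hPZ_ge x z) (hr0 z x) (hposcase x z)
  have hg : ∑ x, ∑ z, (PXbec δ x * Q x z - margZ δ Q z * backB δ d z x) = 0 := by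
    have h1 : ∑ x, ∑ z, PXbec δ x * Q x z = 1 := by
      have hrow : ∀ x : Option Bool, ∑ z, PXbec δ x * Q x z = PXbec δ x := by
        intro x; rw [← Finset.mul_sum, (hQ x).2, mul_one]
      rw [Finset.sum_congr rfl fun x _ => hrow x, sum_PX]
    have h2 : ∑ x : Option Bool, ∑ z, margZ δ Q z * backB δ d z x = 1 := by
      rw [Finset.sum_comm]
      have hrow : ∀ z : Bool, ∑ x, margZ δ Q z * backB δ d z x = margZ δ Q z := by
        intro z; rw [← Finset.mul_sum, sum_backB, mul_one]
      rw [Finset.sum_congr rfl fun z _ => hrow z]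
      unfold margZ
      rw [Finset.sum_comm]
      exact h1
    simp only [Finset.sum_sub_distrib]
    rw [h1, h2, sub_self]
  have hsplit : ∑ x, ∑ z, (PXbec δ x * Q x z * Real.log (backB δ d z x / PXbec δ x)
      + (PXbec δ x * Q x z - margZ δ Q z * backB δ d z x))
      = ∑ x, ∑ z, PXbec δ x * Q x z * Real.log (backB δ d z x / PXbec δ x) := by
    simp only [Finset.sum_add_distrib]
    rw [hg, add_zero]
  have hS : ∑ x, ∑ z, PXbec δ x * Q x z * Real.log (backB δ d z x / PXbec δ x)
      = (1-δ)/2 * (Q (some true) true + Q (some false) false)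
          * Real.log ((1 - d - δ/2) / ((1-δ)/2))
      + (1-δ)/2 * (Q (some false) true + Q (some true) false)
          * Real.log ((d - δ/2) / ((1-δ)/2)) := by
    have hδδ : δ / δ = 1 := div_self hδ0.ne'
    simp [Fintype.sum_option, Fintype.sum_bool, backB, PX_some, PX_none, hδδ]
    ring
  refine le_trans ?_ hlow
  rw [hsplit, hS]
  have hu' : Q (some true) true + Q (some false) false
      = 2 - (Q (some false) true + Q (some true) false) := by
    have h1 := hQ1 (some true); have h2 := hQ1 (some false); linarith
  rw [hu']
  clear hlow hg hsplit hS hPZ_ge hposcase hr0 hPX0 hdist hQ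
  rcases hA0.lt_or_eq with hApos | heq
  · -- A > 0 case
    have ha'p : 0 < (d - δ/2) / (1-δ) := div_pos hApos h1δ
    have hb'p : 0 < (1 - d - δ/2) / (1-δ) := div_pos hB0 h1δ
    have hlogA : Real.log ((d - δ/2) / ((1-δ)/2))
        = Real.log ((d - δ/2) / (1-δ)) + Real.log 2 := by
      rw [show (d - δ/2) / ((1-δ)/2) = (d - δ/2) / (1-δ) * 2 by
        field_simp, Real.log_mul ha'p.ne' two_ne_zero]
    have hlogB : Real.log ((1 - d - δ/2) / ((1-δ)/2))
        = Real.log ((1 - d - δ/2) / (1-δ)) + Real.log 2 := by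
      rw [show (1 - d - δ/2) / ((1-δ)/2) = (1 - d - δ/2) / (1-δ) * 2 by
        field_simp, Real.log_mul hb'p.ne' two_ne_zero]
    have h1ma : 1 - (d - δ/2) / (1-δ) = (1 - d - δ/2) / (1-δ) := by
      field_simp; ring
    have hbin : (1-δ) * binEnt ((d - δ/2) / (1-δ))
        = -((d - δ/2) * Real.log ((d - δ/2) / (1-δ)))
          - (1 - d - δ/2) * Real.log ((1 - d - δ/2) / (1-δ)) := by
      unfold binEnt
      rw [h1ma]
      field_simp
    have hmono : Real.log ((d - δ/2) / (1-δ)) ≤ Real.log ((1 - d - δ/2) / (1-δ)) := by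
      apply Real.log_le_log ha'p
      gcongr
    have hprod : 0 ≤ ((d - δ/2) - (1-δ)/2 * (Q (some false) true + Q (some true) false))
        * (Real.log ((1 - d - δ/2) / (1-δ)) - Real.log ((d - δ/2) / (1-δ))) :=
      mul_nonneg (by linarith) (by linarith)
    rw [hlogA, hlogB]
    linarith [hbin, hprod]
  · -- A = 0 case
    have hdval : d = δ/2 := by linarith
    subst hdval
    have he0' : Q (some false) true = 0 := by
      nlinarith [hQ0 (some false) true, hQ0 (some true) false]
    have he1' : Q (some true) false = 0 := by
      nlinarith [hQ0 (some false) true, hQ0 (some true) false]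
    rw [he0', he1']
    have hz : (δ/2 - δ/2 : ℝ) = 0 := by ring
    have hBv : (1 - δ/2 - δ/2 : ℝ) = 1 - δ := by ring
    rw [hz, hBv]
    have hlog2 : Real.log ((1-δ) / ((1-δ)/2)) = Real.log 2 := by
      rw [show (1-δ) / ((1-δ)/2) = 2 by field_simp]
    have hbin0 : binEnt ((0:ℝ) / (1-δ)) = 0 := by
      simp [binEnt]
    rw [hlog2, hbin0]
    simp

lemma Qst_none (δ d : ℝ) (hδ0 : 0 < δ) (z : Bool) : QstBes δ d none z = 1/2 := by
  have h1 : backB δ d z none = δ := by simp [backB]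
  simp only [QstBes, h1, PX_none]
  field_simp

lemma Qst_same (δ d : ℝ) (hδ1 : δ < 1) (b : Bool) :
    QstBes δ d (some b) b = (1 - d - δ/2) / (1 - δ) := by
  have h : (1:ℝ) - δ ≠ 0 := by intro h; linarith [h]
  simp only [QstBes, backB, PX_some, if_pos rfl, if_true]
  field_simp

lemma Qst_diff (δ d : ℝ) (hδ1 : δ < 1) (b z : Bool) (hbz : b ≠ z) :
    QstBes δ d (some b) z = (d - δ/2) / (1 - δ) := by
  have h : (1:ℝ) - δ ≠ 0 := by intro h; linarith [h]
  have hne : (some b : Option Bool) ≠ some z := by simpa using hbz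
  have h1 : backB δ d z (some b) = d - δ/2 := by
    unfold backB; rw [if_neg hne, if_neg (by simp)]
  simp only [QstBes, h1, PX_some]
  field_simp

lemma kernel_Qst (δ d : ℝ) (hδ0 : 0 < δ) (hδ1 : δ < 1) (hd1 : δ / 2 ≤ d) (hd2 : d ≤ 1 / 2) :
    IsKernel (QstBes δ d) := by
  have h1δ : (0:ℝ) < 1 - δ := by linarith
  rintro (_ | b)
  · constructor
    · intro z; rw [Qst_none δ d hδ0]; norm_num
    · rw [Fintype.sum_bool, Qst_none δ d hδ0, Qst_none δ d hδ0]; norm_num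
  · constructor
    · intro z
      rcases eq_or_ne b z with rfl | hbz
      · rw [Qst_same δ d hδ1]
        apply div_nonneg (by linarith) h1δ.le
      · rw [Qst_diff δ d hδ1 b z hbz]
        apply div_nonneg (by linarith) h1δ.le
    · rw [Fintype.sum_bool]
      cases b
      · rw [Qst_same δ d hδ1, Qst_diff δ d hδ1 _ _ (by simp)]
        field_simp
        ring
      · rw [Qst_same δ d hδ1, Qst_diff δ d hδ1 _ _ (by simp)]
        field_simp
        ring

lemma marg_Qst (δ d : ℝ) (hδ0 : 0 < δ) (hδ1 : δ < 1) (z : Bool) :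
    margZ δ (QstBes δ d) z = 1 / 2 := by
  have h1δ : (0:ℝ) < 1 - δ := by linarith
  unfold margZ
  rw [Fintype.sum_option, Fintype.sum_bool]
  rw [PX_none, PX_some, PX_some, Qst_none δ d hδ0]
  cases z
  · rw [Qst_same δ d hδ1, Qst_diff δ d hδ1 _ _ (by simp)]
    field_simp
    ring
  · rw [Qst_same δ d hδ1, Qst_diff δ d hδ1 _ _ (by simp)]
    field_simp
    ring

lemma avg_Qst (δ d : ℝ) (hδ0 : 0 < δ) (hδ1 : δ < 1) :
    avgDist δ (QstBes δ d) = d := by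
  have h1δ : (0:ℝ) < 1 - δ := by linarith
  unfold avgDist
  simp only [Fintype.sum_option, Fintype.sum_bool, PSb, Wbec, dstH]
  rw [Qst_none δ d hδ0, Qst_none δ d hδ0,
    Qst_same δ d hδ1, Qst_same δ d hδ1,
    Qst_diff δ d hδ1 true false (by simp), Qst_diff δ d hδ1 false true (by simp)]
  simp
  field_simp
  ring

set_option maxHeartbeats 1000000 in
lemma mut_Qst (δ d : ℝ) (hδ0 : 0 < δ) (hδ1 : δ < 1) (hd1 : δ / 2 ≤ d) (hd2 : d ≤ 1 / 2) :
    mutInfo δ (QstBes δ d)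
      = (1 - δ) * (Real.log 2 - binEnt ((d - δ / 2) / (1 - δ))) := by
  have h1δ : (0:ℝ) < 1 - δ := by linarith
  have hA0 : (0:ℝ) ≤ d - δ/2 := by linarith
  have hB0 : (0:ℝ) < 1 - d - δ/2 := by linarith
  unfold mutInfo
  simp only [Fintype.sum_option, Fintype.sum_bool]
  simp only [marg_Qst δ d hδ0 hδ1, PX_none, PX_some, Qst_none δ d hδ0, Qst_same δ d hδ1]
  rw [Qst_diff δ d hδ1 true false (by simp), Qst_diff δ d hδ1 false true (by simp)]
  have hhalf : Real.log ((1/2 : ℝ)/(1/2)) = 0 := by norm_num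
  rw [hhalf]
  rw [show ((1 - d - δ/2)/(1-δ))/(1/2 : ℝ) = ((1 - d - δ/2)/(1-δ)) * 2 from by ring,
    show ((d - δ/2)/(1-δ))/(1/2 : ℝ) = ((d - δ/2)/(1-δ)) * 2 from by ring]
  rcases hA0.lt_or_eq with hApos | heq
  · have ha'p : 0 < (d - δ/2) / (1-δ) := div_pos hApos h1δ
    have hb'p : 0 < (1 - d - δ/2) / (1-δ) := div_pos hB0 h1δ
    rw [Real.log_mul ha'p.ne' two_ne_zero, Real.log_mul hb'p.ne' two_ne_zero]
    have h1ma : 1 - (d - δ/2) / (1-δ) = (1 - d - δ/2) / (1-δ) := by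
      field_simp; ring
    have hbin : (1-δ) * binEnt ((d - δ/2) / (1-δ))
        = -((d - δ/2) * Real.log ((d - δ/2) / (1-δ)))
          - (1 - d - δ/2) * Real.log ((1 - d - δ/2) / (1-δ)) := by
      unfold binEnt
      rw [h1ma]
      field_simp
    have hfa : (1-δ) * ((d - δ/2)/(1-δ)) = d - δ/2 := by field_simp
    have hfb : (1-δ) * ((1 - d - δ/2)/(1-δ)) = 1 - d - δ/2 := by field_simp
    linear_combination hbin + (Real.log ((d - δ/2)/(1-δ)) + Real.log 2) * hfa
      + (Real.log ((1 - d - δ/2)/(1-δ)) + Real.log 2) * hfb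
  · have hdval : d = δ/2 := by linarith
    subst hdval
    rw [show (δ/2 - δ/2 : ℝ) = 0 from by ring, show (1 - δ/2 - δ/2 : ℝ) = 1 - δ from by ring,
      zero_div, div_self h1δ.ne', one_mul]
    have hbin0 : binEnt (0:ℝ) = 0 := by simp [binEnt]
    rw [hbin0]
    simp
    ring

/-- **Rate-distortion function of erased fair coin flips** (Eq. (41)): for a fair binary
source observed through a binary erasure channel with erasure rate `δ` and bit-error
distortion, for `δ/2 ≤ d ≤ 1/2`,
`R(d) = (1−δ)(log 2 − h((d − δ/2)/(1 − δ)))`, and the minimum is achieved by the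
equiprobable reproduction distribution together with the stated backward channel. -/
theorem rate_distortion_erased_fair_coin_flips
    (δ d : ℝ) (hδ0 : 0 < δ) (hδ1 : δ < 1)
    (hd1 : δ / 2 ≤ d) (hd2 : d ≤ 1 / 2) :
    Rbes δ d = (1 - δ) * (Real.log 2 - binEnt ((d - δ / 2) / (1 - δ))) ∧
    IsKernel (QstBes δ d) ∧
    avgDist δ (QstBes δ d) ≤ d ∧
    mutInfo δ (QstBes δ d) = Rbes δ d ∧
    (∀ z, margZ δ (QstBes δ d) z = 1 / 2) := by
  have hK := kernel_Qst δ d hδ0 hδ1 hd1 hd2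
  have havg : avgDist δ (QstBes δ d) ≤ d := (avg_Qst δ d hδ0 hδ1).le
  have hmut := mut_Qst δ d hδ0 hδ1 hd1 hd2
  have hmem : (1 - δ) * (Real.log 2 - binEnt ((d - δ / 2) / (1 - δ)))
      ∈ { r | ∃ Q : Option Bool → Bool → ℝ,
        IsKernel Q ∧ avgDist δ Q ≤ d ∧ mutInfo δ Q = r } :=
    ⟨QstBes δ d, hK, havg, hmut⟩
  have hlb : ∀ r ∈ { r | ∃ Q : Option Bool → Bool → ℝ,
      IsKernel Q ∧ avgDist δ Q ≤ d ∧ mutInfo δ Q = r },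
      (1 - δ) * (Real.log 2 - binEnt ((d - δ / 2) / (1 - δ))) ≤ r := by
    rintro r ⟨Q, hQ, hdist, rfl⟩
    exact converse δ d hδ0 hδ1 hd1 hd2 Q hQ hdist
  have hR : Rbes δ d = (1 - δ) * (Real.log 2 - binEnt ((d - δ / 2) / (1 - δ))) := by
    unfold Rbes
    exact le_antisymm (csInf_le ⟨_, fun r hr => hlb r hr⟩ hmem) (le_csInf ⟨_, hmem⟩ hlb)
  exact ⟨hR, hK, havg, by rw [hmut, hR], fun z => marg_Qst δ d hδ0 hδ1 z⟩
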